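/- Let (N_i)_{i∈ℕ} and (M_i)_{i∈ℕ} be decreasing sequences of von Neumann algebras on a Hilbert space with N_i ⊆ M_i for all i, N = ⋂_i N_i, M = ⋂_i M_i, and suppose for each i there is a conditional expectation E_i : M_i → N_i satisfying the Pimsner–Popa bound E_i(x) ≥ λ_i x for all x ∈ (M_i)_+ with λ_i⁻¹ = [M_i : N_i]_{E_i}. Then [M : N] ≤ liminf_{i→∞} [M_i : N_i], where [M : N] denotes the minimal index; in particular, any weak limit point E of the restrictions E_i|_M is a conditional expectation from M onto N satisfying E(x) ≥ λ x for every λ⁻¹ > liminf_i [M_i : N_i]. -/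

import Mathlib

open Filter

variable {H : Type*} [NormedAddCommGroup H] [InnerProductSpace ℂ H] [CompleteSpace H]

/-- `E` is a conditional expectation from (the subset) `Mc` onto `Nc`. -/
def IsCondExpectation (Nc Mc : Set (H →L[ℂ] H))
    (E : (H →L[ℂ] H) →ₗ[ℂ] (H →L[ℂ] H)) : Prop :=
  (∀ x ∈ Mc, E x ∈ Nc) ∧ (∀ x ∈ Nc, E x = x) ∧
    (∀ x ∈ Mc, ContinuousLinearMap.IsPositive x → ContinuousLinearMap.IsPositive (E x))

/-- The Pimsner–Popa bound: `E x ≥ lam • x` for every positive `x ∈ Mc`. -/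
def PimsnerPopaBound (Mc : Set (H →L[ℂ] H))
    (E : (H →L[ℂ] H) →ₗ[ℂ] (H →L[ℂ] H)) (lam : ℝ) : Prop :=
  ∀ x ∈ Mc, ContinuousLinearMap.IsPositive x →
    ContinuousLinearMap.IsPositive (E x - (lam : ℂ) • x)

/-- The minimal index `[M : N] = inf_E [M : N]_E` of an inclusion `Nc ⊆ Mc`, where
`[M : N]_E = λ⁻¹` with `λ` the best Pimsner–Popa constant for the expectation `E`. -/
noncomputable def minIndex (Nc Mc : Set (H →L[ℂ] H)) : ℝ :=
  sInf {c : ℝ | 1 ≤ c ∧ ∃ E : (H →L[ℂ] H) →ₗ[ℂ] (H →L[ℂ] H),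
    IsCondExpectation Nc Mc E ∧ PimsnerPopaBound Mc E c⁻¹}

section Aux

open Topology ContinuousLinearMap

local notation "⟪" x ", " y "⟫" => @inner ℂ _ _ x y

private lemma ulim_exists {α : Type*} (𝒰 : Ultrafilter α) (g : α → ℂ) (C : ℝ)
    (hg : ∀ i, ‖g i‖ ≤ C) : ∃ c : ℂ, Tendsto g ↑𝒰 (𝓝 c) := by
  have h1 : ↑(𝒰.map g) ≤ 𝓟 (Metric.closedBall (0:ℂ) C) := by
    rw [le_principal_iff, Ultrafilter.coe_map, mem_map]
    exact univ_mem' fun i => by simpa [Metric.mem_closedBall, dist_eq_norm] using hg i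
  obtain ⟨c, -, hc⟩ := (isCompact_closedBall (0:ℂ) C).ultrafilter_le_nhds (𝒰.map g) h1
  exact ⟨c, hc⟩

private lemma wlim_exists (𝒰 : Ultrafilter ℕ) (f : ℕ → H) (C : ℝ)
    (hb : ∀ i, ‖f i‖ ≤ C) :
    ∃ v : H, ∀ z, Tendsto (fun i => ⟪f i, z⟫) ↑𝒰 (𝓝 ⟪v, z⟫) := by
  have hz : ∀ z : H, ∃ c : ℂ, Tendsto (fun i => ⟪f i, z⟫) ↑𝒰 (𝓝 c) := fun z =>
    ulim_exists 𝒰 _ (C * ‖z‖) fun i =>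
      (norm_inner_le_norm _ _).trans (by gcongr; exact hb i)
  choose c hc using hz
  have hadd : ∀ y z, c (y + z) = c y + c z := fun y z => by
    refine tendsto_nhds_unique ?_ ((hc y).add (hc z))
    simpa [inner_add_right] using hc (y + z)
  have hsmul : ∀ (a : ℂ) z, c (a • z) = a * c z := fun a z => by
    refine tendsto_nhds_unique ?_ ((hc z).const_mul a)
    simpa [inner_smul_right] using hc (a • z)
  have hbound : ∀ z, ‖c z‖ ≤ C * ‖z‖ := fun z =>
    le_of_tendsto (hc z).norm (Eventually.of_forall fun i =>
      (norm_inner_le_norm _ _).trans (by gcongr; exact hb i))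
  let φ : H →L[ℂ] ℂ := LinearMap.mkContinuous
    { toFun := c, map_add' := hadd, map_smul' := hsmul } C
    (fun z => hbound z)
  refine ⟨(InnerProductSpace.toDual ℂ H).symm φ, fun z => ?_⟩
  rw [InnerProductSpace.toDual_symm_apply]
  exact hc z

private lemma algebraMap_real_eq (c : ℝ) :
    (algebraMap ℝ (H →L[ℂ] H)) c = (c : ℂ) • (1 : H →L[ℂ] H) := by
  rw [Algebra.algebraMap_eq_smul_one, RCLike.real_smul_eq_coe_smul (K := ℂ)]; rfl

private lemma norm_coe_smul_one_le (c : ℝ) : ‖(c:ℂ) • (1 : H →L[ℂ] H)‖ ≤ |c| :=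
  calc ‖(c:ℂ) • (1 : H →L[ℂ] H)‖ = ‖(c:ℂ)‖ * ‖(1 : H →L[ℂ] H)‖ := norm_smul _ _
  _ ≤ |c| * 1 := by rw [Complex.norm_real, Real.norm_eq_abs]; gcongr; exact ContinuousLinearMap.norm_id_le (𝕜 := ℂ) (E := H)
  _ = |c| := mul_one _

private lemma re_coe' (r : ℝ) : RCLike.re ((r : ℝ) : ℂ) = r := rfl

private lemma smul_one_add_pos {a : H →L[ℂ] H} (ha : IsSelfAdjoint a) :
    IsPositive ((‖a‖ : ℂ) • (1 : H →L[ℂ] H) + a) := by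
  rw [isPositive_iff_complex]
  intro y
  have hre : ((Complex.re ⟪a y, y⟫ : ℝ) : ℂ) = ⟪a y, y⟫ :=
    (isSelfAdjoint_iff_isSymmetric.mp ha).coe_reApplyInnerSelf_apply y
  have habs : |Complex.re ⟪a y, y⟫| ≤ ‖a‖ * ‖y‖ ^ 2 := by
    calc |Complex.re ⟪a y, y⟫| ≤ ‖⟪a y, y⟫‖ := Complex.abs_re_le_norm _
    _ ≤ ‖a y‖ * ‖y‖ := norm_inner_le_norm _ _
    _ ≤ (‖a‖ * ‖y‖) * ‖y‖ := by gcongr; exact a.le_opNorm y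
    _ = ‖a‖ * ‖y‖ ^ 2 := by ring
  have hself : ⟪y, y⟫ = ((‖y‖ ^ 2 : ℝ) : ℂ) := by
    rw [@inner_self_eq_norm_sq_to_K ℂ]; norm_cast
  have hval2 : ⟪((‖a‖ : ℂ) • (1 : H →L[ℂ] H) + a) y, y⟫
      = ((‖a‖ * ‖y‖ ^ 2 + Complex.re ⟪a y, y⟫ : ℝ) : ℂ) := by
    rw [ContinuousLinearMap.add_apply, inner_add_left, ContinuousLinearMap.smul_apply, ContinuousLinearMap.one_apply, inner_smul_left, hself, ← hre]
    push_cast [Complex.conj_ofReal]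
    norm_num [Complex.ofReal_re]
  rw [hval2, re_coe']
  refine ⟨rfl, ?_⟩
  linarith [(abs_le.mp habs).1]

private lemma norm_E_le (Nv Mv : VonNeumannAlgebra H)
    (E : (H →L[ℂ] H) →ₗ[ℂ] (H →L[ℂ] H))
    (hE : IsCondExpectation (Nv : Set (H →L[ℂ] H)) (Mv : Set (H →L[ℂ] H)) E)
    {x : H →L[ℂ] H} (hx : x ∈ (Mv : Set (H →L[ℂ] H))) : ‖E x‖ ≤ 6 * ‖x‖ := by
  have hE1 : E 1 = 1 := hE.2.1 1 (one_mem Nv)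
  have key : ∀ a : H →L[ℂ] H, a ∈ (Mv : Set (H →L[ℂ] H)) → IsSelfAdjoint a →
      ‖E a‖ ≤ 3 * ‖a‖ := by
    intro a haM hsa
    have m1 : (‖a‖:ℂ) • (1 : H →L[ℂ] H) + a ∈ (Mv : Set (H →L[ℂ] H)) :=
      add_mem (Mv.toStarSubalgebra.smul_mem (one_mem Mv.toStarSubalgebra) _) haM
    have m2 : (‖a‖:ℂ) • (1 : H →L[ℂ] H) - a ∈ (Mv : Set (H →L[ℂ] H)) :=
      sub_mem (Mv.toStarSubalgebra.smul_mem (one_mem Mv.toStarSubalgebra) _) haM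
    have p1 := hE.2.2 _ m1 (smul_one_add_pos hsa)
    have p2' : IsPositive ((‖a‖:ℂ) • (1 : H →L[ℂ] H) - a) := by
      have := smul_one_add_pos hsa.neg
      rw [norm_neg] at this
      simpa [sub_eq_add_neg] using this
    have p2 := hE.2.2 _ m2 p2'
    rw [map_add, map_smul, hE1] at p1
    rw [map_sub, map_smul, hE1] at p2
    have hpos : (0 : H →L[ℂ] H) ≤ (‖a‖:ℂ) • 1 + E a := by
      rw [ContinuousLinearMap.nonneg_iff_isPositive]; exact p1
    have hle : (‖a‖:ℂ) • (1 : H →L[ℂ] H) + E a ≤ algebraMap ℝ _ (2 * ‖a‖) := by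
      rw [ContinuousLinearMap.le_def]
      have heq : algebraMap ℝ (H →L[ℂ] H) (2 * ‖a‖) - ((‖a‖:ℂ) • 1 + E a)
          = (‖a‖:ℂ) • 1 - E a := by
        rw [algebraMap_real_eq]
        push_cast
        module
      rw [heq]; exact p2
    have hn : ‖(‖a‖:ℂ) • (1 : H →L[ℂ] H) + E a‖ ≤ 2 * ‖a‖ :=
      (CStarAlgebra.norm_le_iff_le_algebraMap _ (by positivity) hpos).mpr hle
    calc ‖E a‖ = ‖((‖a‖:ℂ) • (1 : H →L[ℂ] H) + E a) - (‖a‖:ℂ) • 1‖ := by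
          congr 1; abel
    _ ≤ ‖(‖a‖:ℂ) • (1 : H →L[ℂ] H) + E a‖ + ‖(‖a‖:ℂ) • (1 : H →L[ℂ] H)‖ := norm_sub_le _ _
    _ ≤ 2 * ‖a‖ + |‖a‖| := by gcongr; exact norm_coe_smul_one_le _
    _ = 3 * ‖a‖ := by rw [abs_of_nonneg (norm_nonneg a)]; ring
  set a : H →L[ℂ] H := (2⁻¹ : ℂ) • (x + star x) with ha_def
  set b : H →L[ℂ] H := (-(Complex.I)/2) • (x - star x) with hb_def
  have hxm : star x ∈ (Mv : Set (H →L[ℂ] H)) := star_mem hx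
  have haM : a ∈ (Mv : Set (H →L[ℂ] H)) :=
    Mv.toStarSubalgebra.smul_mem (add_mem hx hxm) _
  have hbM : b ∈ (Mv : Set (H →L[ℂ] H)) :=
    Mv.toStarSubalgebra.smul_mem (sub_mem hx hxm) _
  have hsa : IsSelfAdjoint a := by
    rw [IsSelfAdjoint, ha_def, star_smul, star_add, star_star]
    simp [add_comm]
  have hsb : IsSelfAdjoint b := by
    rw [IsSelfAdjoint, hb_def, star_smul, star_sub, star_star]
    rw [Complex.star_def, show (starRingEnd ℂ) (-(Complex.I)/2) = Complex.I/2 by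
      rw [map_div₀, map_neg, Complex.conj_I, map_ofNat]; ring]
    module
  have hIb : Complex.I • b = (2⁻¹:ℂ) • (x - star x) := by
    rw [hb_def, smul_smul, show Complex.I * (-(Complex.I)/2) = (2⁻¹:ℂ) by
      linear_combination (-1/2 : ℂ) * Complex.I_mul_I]
  have hxab : x = a + Complex.I • b := by
    rw [hIb, ha_def]
    module
  have hna : ‖a‖ ≤ ‖x‖ := by
    rw [ha_def]
    calc ‖(2⁻¹:ℂ) • (x + star x)‖ = ‖(2⁻¹:ℂ)‖ * ‖x + star x‖ := norm_smul _ _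
    _ ≤ 2⁻¹ * (‖x‖ + ‖star x‖) := by
        gcongr
        · simp
        · exact norm_add_le _ _
    _ = ‖x‖ := by rw [norm_star]; ring
  have hnb : ‖b‖ ≤ ‖x‖ := by
    rw [hb_def]
    calc ‖(-(Complex.I)/2) • (x - star x)‖ = ‖(-(Complex.I)/2 : ℂ)‖ * ‖x - star x‖ :=
      norm_smul _ _
    _ ≤ 2⁻¹ * (‖x‖ + ‖star x‖) := by
        gcongr
        · simp [norm_div]
        · exact norm_sub_le _ _
    _ = ‖x‖ := by rw [norm_star]; ring
  calc ‖E x‖ = ‖E a + Complex.I • E b‖ := by rw [hxab, map_add, map_smul, map_smul]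
  _ ≤ ‖E a‖ + ‖Complex.I • E b‖ := norm_add_le _ _
  _ = ‖E a‖ + ‖E b‖ := by rw [norm_smul]; simp
  _ ≤ 3 * ‖x‖ + 3 * ‖x‖ := add_le_add ((key a haM hsa).trans (by linarith))
      ((key b hbM hsb).trans (by linarith))
  _ = 6 * ‖x‖ := by ring

end Aux

/-- Let `(N_i)` and `(M_i)` be decreasing sequences of von Neumann algebras
with `N_i ⊆ M_i`, `N = ⋂ N_i`, `M = ⋂ M_i`, and suppose each inclusion `N_i ⊆ M_i` admits a
conditional expectation `E_i` with Pimsner–Popa bound `E_i(x) ≥ λ_i x`, `λ_i⁻¹ = [M_i:N_i]_{E_i}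
= idx i`.  Then `[M : N] ≤ liminf_i [M_i : N_i]` (minimal index).  (We assume, as we may, that
the sequence of indices is bounded.) -/
theorem minIndex_le_liminf_of_decreasing
    (N M : ℕ → VonNeumannAlgebra H)
    (hNM : ∀ i, (N i : Set (H →L[ℂ] H)) ⊆ (M i : Set (H →L[ℂ] H)))
    (hNdec : ∀ i, (N (i + 1) : Set (H →L[ℂ] H)) ⊆ (N i : Set (H →L[ℂ] H)))
    (hMdec : ∀ i, (M (i + 1) : Set (H →L[ℂ] H)) ⊆ (M i : Set (H →L[ℂ] H)))
    (E : ℕ → ((H →L[ℂ] H) →ₗ[ℂ] (H →L[ℂ] H)))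
    (idx : ℕ → ℝ)
    (hidx1 : ∀ i, 1 ≤ idx i)
    (hbdd : IsBoundedUnder (· ≤ ·) atTop idx)
    (hE : ∀ i, IsCondExpectation (N i : Set (H →L[ℂ] H)) (M i : Set (H →L[ℂ] H)) (E i))
    (hPP : ∀ i, PimsnerPopaBound (M i : Set (H →L[ℂ] H)) (E i) (idx i)⁻¹) :
    minIndex (⋂ i, (N i : Set (H →L[ℂ] H))) (⋂ i, (M i : Set (H →L[ℂ] H)))
      ≤ liminf idx atTop := by
  classical
  set L := liminf idx atTop with hLdef
  have hbelow : IsBoundedUnder (· ≥ ·) atTop idx := isBoundedUnder_of ⟨1, fun i => hidx1 i⟩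
  have hcob : IsCoboundedUnder (· ≥ ·) atTop idx := hbdd.isCoboundedUnder_ge
  have hL1 : (1:ℝ) ≤ L := le_liminf_of_le hcob (Eventually.of_forall hidx1)
  have hL0 : (0:ℝ) < L := lt_of_lt_of_le one_pos hL1
  have hcl : MapClusterPt L atTop idx := by
    rw [mapClusterPt_iff_frequently]
    intro s hs
    obtain ⟨ε, hε, hsub⟩ := Metric.mem_nhds_iff.mp hs
    have h1 : ∀ᶠ i in atTop, L - ε < idx i := eventually_lt_of_lt_liminf (by linarith) hbelow
    have h2 : ∃ᶠ i in atTop, idx i < L + ε := frequently_lt_of_liminf_lt hcob (by linarith)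
    refine (h2.and_eventually h1).mono fun i hi => hsub ?_
    rw [Metric.mem_ball, Real.dist_eq, abs_lt]
    constructor <;> [linarith [hi.2]; linarith [hi.1]]
  obtain ⟨𝒰, h𝒰le, h𝒰lim⟩ := mapClusterPt_iff_ultrafilter.mp hcl
  have hMantiS : Antitone (fun i => (M i : Set (H →L[ℂ] H))) := antitone_nat_of_succ_le hMdec
  have hNantiS : Antitone (fun i => (N i : Set (H →L[ℂ] H))) := antitone_nat_of_succ_le hNdec
  set S : Set (H →L[ℂ] H) := ⋂ i, (M i : Set (H →L[ℂ] H)) with hSdef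
  have hmemS : ∀ x ∈ S, ∀ i, x ∈ (M i : Set (H →L[ℂ] H)) := fun x hx i => Set.mem_iInter.mp hx i
  have hnb : ∀ (i : ℕ) (x : H →L[ℂ] H), x ∈ S → ∀ y : H,
      ‖E i x y‖ ≤ 6 * ‖x‖ * ‖y‖ := by
    intro i x hx y
    calc ‖E i x y‖ ≤ ‖E i x‖ * ‖y‖ := ContinuousLinearMap.le_opNorm _ _
    _ ≤ (6 * ‖x‖) * ‖y‖ := by
        gcongr
        exact norm_E_le (N i) (M i) (E i) (hE i) (hmemS x hx i)
    _ = 6 * ‖x‖ * ‖y‖ := by ring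
  have hwl : ∀ (x : H →L[ℂ] H) (y : H), ∃ v : H, x ∈ S →
      ∀ z, Tendsto (fun i => (inner ℂ (E i x y) z : ℂ)) ↑𝒰 (nhds (inner ℂ v z)) := by
    intro x y
    by_cases hx : x ∈ S
    · obtain ⟨v, hv⟩ := wlim_exists 𝒰 (fun i => E i x y) (6 * ‖x‖ * ‖y‖)
        (fun i => hnb i x hx y)
      exact ⟨v, fun _ => hv⟩
    · exact ⟨0, fun h => absurd h hx⟩
  choose v hv using hwl
  have hTex : ∀ x : H →L[ℂ] H, ∃ T : H →L[ℂ] H, x ∈ S →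
      ∀ y z, Tendsto (fun i => (inner ℂ (E i x y) z : ℂ)) ↑𝒰 (nhds (inner ℂ (T y) z)) := by
    intro x
    by_cases hx : x ∈ S
    · have hadd : ∀ y₁ y₂, v x (y₁ + y₂) = v x y₁ + v x y₂ := by
        intro y₁ y₂
        apply ext_inner_right ℂ
        intro z
        refine tendsto_nhds_unique (hv x (y₁ + y₂) hx z) ?_
        have h := (hv x y₁ hx z).add (hv x y₂ hx z)
        rw [inner_add_left]
        simpa [map_add, inner_add_left] using h
      have hsmul : ∀ (a : ℂ) (y : H), v x (a • y) = a • v x y := by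
        intro a y
        apply ext_inner_right ℂ
        intro z
        refine tendsto_nhds_unique (hv x (a • y) hx z) ?_
        have h := (hv x y hx z).const_mul ((starRingEnd ℂ) a)
        rw [inner_smul_left]
        simpa [map_smul, inner_smul_left, mul_comm] using h
      have hbound : ∀ y : H, ‖v x y‖ ≤ (6 * ‖x‖) * ‖y‖ := by
        intro y
        have hC : (0:ℝ) ≤ 6 * ‖x‖ * ‖y‖ := by positivity
        have h2 : ‖(inner ℂ (v x y) (v x y) : ℂ)‖ ≤ (6 * ‖x‖ * ‖y‖) * ‖v x y‖ :=
          le_of_tendsto (hv x y hx (v x y)).norm (Eventually.of_forall fun i =>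
            (norm_inner_le_norm _ _).trans (by gcongr; exact hnb i x hx y))
        have h3 : ‖(inner ℂ (v x y) (v x y) : ℂ)‖ = ‖v x y‖ ^ 2 := by
          rw [@inner_self_eq_norm_sq_to_K ℂ, norm_pow, RCLike.norm_ofReal, abs_norm]
        rw [h3] at h2
        nlinarith [norm_nonneg (v x y), hC, h2]
      refine ⟨LinearMap.mkContinuous
        { toFun := v x, map_add' := hadd, map_smul' := hsmul } (6 * ‖x‖) hbound,
        fun _ y z => hv x y hx z⟩
    · exact ⟨0, fun h => absurd h hx⟩
  choose T hT using hTex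
  have hSadd : ∀ {x y : H →L[ℂ] H}, x ∈ S → y ∈ S → x + y ∈ S := fun {x y} hx hy =>
    Set.mem_iInter.mpr fun i => add_mem (hmemS _ hx i) (hmemS _ hy i)
  have hSsmul : ∀ (c : ℂ) {x : H →L[ℂ] H}, x ∈ S → c • x ∈ S := fun c x hx =>
    Set.mem_iInter.mpr fun i => (M i).toStarSubalgebra.smul_mem (hmemS _ hx i) c
  have hS0 : (0 : H →L[ℂ] H) ∈ S :=
    Set.mem_iInter.mpr fun i => zero_mem (M i).toStarSubalgebra
  let Msub : Submodule ℂ (H →L[ℂ] H) :=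
    { carrier := S
      add_mem' := fun hx hy => hSadd hx hy
      zero_mem' := hS0
      smul_mem' := fun c x hx => hSsmul c hx }
  have Tadd : ∀ x y : H →L[ℂ] H, x ∈ S → y ∈ S → T (x + y) = T x + T y := by
    intro x y hx hy
    ext w
    apply ext_inner_right ℂ
    intro z
    refine tendsto_nhds_unique (hT (x + y) (hSadd hx hy) w z) ?_
    have h := (hT x hx w z).add (hT y hy w z)
    rw [ContinuousLinearMap.add_apply, inner_add_left]
    simpa [map_add, ContinuousLinearMap.add_apply, inner_add_left] using h
  have Tsmul : ∀ (c : ℂ) (x : H →L[ℂ] H), x ∈ S → T (c • x) = c • T x := by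
    intro c x hx
    ext w
    apply ext_inner_right ℂ
    intro z
    refine tendsto_nhds_unique (hT (c • x) (hSsmul c hx) w z) ?_
    have h := (hT x hx w z).const_mul ((starRingEnd ℂ) c)
    rw [ContinuousLinearMap.smul_apply, inner_smul_left]
    simpa [map_smul, ContinuousLinearMap.smul_apply, inner_smul_left, mul_comm] using h
  obtain ⟨Q, hQ⟩ := Submodule.exists_isCompl Msub
  let π := Msub.linearProjOfIsCompl Q hQ
  let F : Msub →ₗ[ℂ] (H →L[ℂ] H) :=
    { toFun := fun p => T p.1
      map_add' := fun p q => Tadd p.1 q.1 p.2 q.2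
      map_smul' := fun c p => Tsmul c p.1 p.2 }
  let Einf : (H →L[ℂ] H) →ₗ[ℂ] (H →L[ℂ] H) := F.comp π
  have hEinf : ∀ (x : H →L[ℂ] H) (hx : x ∈ S), Einf x = T x := by
    intro x hx
    have hπ : π x = ⟨x, hx⟩ := Submodule.linearProjOfIsCompl_apply_left hQ ⟨x, hx⟩
    show F (π x) = T x
    rw [hπ]
    rfl
  have hlim : ∀ x : H →L[ℂ] H, x ∈ S → ∀ y z,
      Tendsto (fun i => (inner ℂ (E i x y) z : ℂ)) ↑𝒰 (nhds (inner ℂ (Einf x y) z)) := by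
    intro x hx y z
    rw [hEinf x hx]
    exact hT x hx y z
  have hclosed : IsClosed {c : ℂ | ((c.re : ℝ) : ℂ) = c ∧ 0 ≤ c.re} :=
    IsClosed.inter
      (isClosed_eq (Complex.continuous_ofReal.comp Complex.continuous_re) continuous_id)
      (isClosed_le continuous_const Complex.continuous_re)
  have P1 : ∀ x ∈ S, Einf x ∈ ⋂ j, (N j : Set (H →L[ℂ] H)) := by
    intro x hx
    refine Set.mem_iInter.mpr fun j => ?_
    have hxNj : ∀ i, j ≤ i → E i x ∈ (N j : Set (H →L[ℂ] H)) := fun i hji =>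
      hNantiS hji ((hE i).1 x (hmemS x hx i))
    rw [← (N j).centralizer_centralizer]
    rw [Set.mem_centralizer_iff]
    intro b hb
    ext y
    apply ext_inner_right ℂ
    intro z
    have hcomm : ∀ᶠ i in (𝒰 : Filter ℕ), (E i x) * b = b * (E i x) := by
      refine h𝒰le ?_
      filter_upwards [eventually_ge_atTop j] with i hji
      exact hb (E i x) (hxNj i hji)
    have h1 : Tendsto (fun i => (inner ℂ (E i x y) (ContinuousLinearMap.adjoint b z) : ℂ)) ↑𝒰
        (nhds (inner ℂ (Einf x y) (ContinuousLinearMap.adjoint b z))) :=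
      hlim x hx y (ContinuousLinearMap.adjoint b z)
    have h2 : ∀ᶠ i in (𝒰 : Filter ℕ),
        (inner ℂ (E i x y) (ContinuousLinearMap.adjoint b z) : ℂ) = inner ℂ ((E i x) (b y)) z := by
      filter_upwards [hcomm] with i hi
      rw [ContinuousLinearMap.adjoint_inner_right]
      congr 1
      calc b ((E i x) y) = (b * (E i x)) y := (ContinuousLinearMap.mul_apply _ _ _).symm
      _ = ((E i x) * b) y := by rw [hi]
      _ = (E i x) (b y) := ContinuousLinearMap.mul_apply _ _ _
    have rhs : Tendsto (fun i => (inner ℂ ((E i x) (b y)) z : ℂ)) ↑𝒰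
        (nhds (inner ℂ (b ((Einf x) y)) z)) := by
      rw [← ContinuousLinearMap.adjoint_inner_right b (Einf x y) z]
      exact Tendsto.congr' h2 h1
    have lhs : Tendsto (fun i => (inner ℂ ((E i x) (b y)) z : ℂ)) ↑𝒰
        (nhds (inner ℂ ((Einf x) (b y)) z)) := hlim x hx (b y) z
    exact tendsto_nhds_unique rhs lhs
  have P2 : ∀ x ∈ ⋂ i, (N i : Set (H →L[ℂ] H)), Einf x = x := by
    intro x hx
    have hxS : x ∈ S := Set.mem_iInter.mpr fun i => hNM i (Set.mem_iInter.mp hx i)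
    ext y
    apply ext_inner_right ℂ
    intro z
    refine tendsto_nhds_unique (hlim x hxS y z) ?_
    have heq : (fun i => (inner ℂ ((E i x) y) z : ℂ)) = fun _ => (inner ℂ (x y) z : ℂ) :=
      funext fun i => by rw [(hE i).2.1 x (Set.mem_iInter.mp hx i)]
    rw [heq]
    exact tendsto_const_nhds
  have P3 : ∀ x ∈ S, ContinuousLinearMap.IsPositive x →
      ContinuousLinearMap.IsPositive (Einf x) := by
    intro x hx hpos
    rw [ContinuousLinearMap.isPositive_iff_complex]
    intro y
    have hmem : ∀ i, (inner ℂ ((E i x) y) y : ℂ) ∈ {c : ℂ | ((c.re : ℝ) : ℂ) = c ∧ 0 ≤ c.re} :=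
      fun i => (ContinuousLinearMap.isPositive_iff_complex _).mp
        ((hE i).2.2 x (hmemS x hx i) hpos) y
    exact hclosed.mem_of_tendsto (hlim x hx y y) (Eventually.of_forall hmem)
  have P4 : ∀ x ∈ S, ContinuousLinearMap.IsPositive x →
      ContinuousLinearMap.IsPositive (Einf x - ((L⁻¹ : ℝ) : ℂ) • x) := by
    intro x hx hpos
    rw [ContinuousLinearMap.isPositive_iff_complex]
    intro y
    have hinv : Tendsto (fun i => (((idx i)⁻¹ : ℝ) : ℂ)) ↑𝒰 (nhds ((L⁻¹ : ℝ) : ℂ)) :=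
      (Complex.continuous_ofReal.tendsto _).comp (h𝒰lim.inv₀ (ne_of_gt hL0))
    have h1 : Tendsto
        (fun i => (inner ℂ ((E i x) y) y : ℂ) - (((idx i)⁻¹ : ℝ) : ℂ) * inner ℂ (x y) y) ↑𝒰
        (nhds ((inner ℂ ((Einf x) y) y : ℂ) - ((L⁻¹ : ℝ) : ℂ) * inner ℂ (x y) y)) :=
      (hlim x hx y y).sub (hinv.mul_const _)
    have hval : ∀ i, (inner ℂ ((E i x) y) y : ℂ) - (((idx i)⁻¹ : ℝ) : ℂ) * inner ℂ (x y) y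
        = inner ℂ (((E i x) - (((idx i)⁻¹ : ℝ) : ℂ) • x) y) y := fun i => by
      rw [ContinuousLinearMap.sub_apply, inner_sub_left, ContinuousLinearMap.smul_apply,
        inner_smul_left, Complex.conj_ofReal]
    have hmem : ∀ i, (inner ℂ ((E i x) y) y : ℂ) - (((idx i)⁻¹ : ℝ) : ℂ) * inner ℂ (x y) y
        ∈ {c : ℂ | ((c.re : ℝ) : ℂ) = c ∧ 0 ≤ c.re} := fun i => by
      rw [hval i]
      exact (ContinuousLinearMap.isPositive_iff_complex _).mp
        (hPP i x (hmemS x hx i) hpos) y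
    have hmem2 := hclosed.mem_of_tendsto h1 (Eventually.of_forall hmem)
    have hval2 : (inner ℂ ((Einf x - ((L⁻¹ : ℝ) : ℂ) • x) y) y : ℂ)
        = (inner ℂ ((Einf x) y) y : ℂ) - ((L⁻¹ : ℝ) : ℂ) * inner ℂ (x y) y := by
      rw [ContinuousLinearMap.sub_apply, inner_sub_left, ContinuousLinearMap.smul_apply,
        inner_smul_left, Complex.conj_ofReal]
    rw [hval2]
    exact hmem2
  apply csInf_le
  · exact ⟨1, fun c hc => hc.1⟩
  · exact ⟨hL1, Einf, ⟨fun x hx => P1 x hx, fun x hx => P2 x hx,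
      fun x hx hp => P3 x hx hp⟩, fun x hx hp => P4 x hx hp⟩
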